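/- In the logistic transition model P(R_{j,t} | R_{t-1}) = exp(aᵀu)/(1+exp(aᵀu)) with u = (u_{R_{-{i}}}, u_{R_{-{i}}}·R_{i,t-1}) and aᵀ = (a_1ᵀ, a_2ᵀ), the first-order Markov process satisfies I(R_i → R_j || R_{-{i,j}}) = 0 if and only if a_2 = 0. -/

import Mathlib

open Classical Finset

namespace Stmt9

variable {Ω : Type*}

/-- Probability of an event under a probability mass function on a finite sample space. -/
noncomputable def pr [Fintype Ω] (μ : Ω → ℝ) (A : Set Ω) : ℝ :=
  ∑ ω, if ω ∈ A then μ ω else 0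

/-- Conditional probability of `A` given `B`. -/
noncomputable def cpr [Fintype Ω] (μ : Ω → ℝ) (A B : Set Ω) : ℝ :=
  pr μ (A ∩ B) / pr μ B

/-- The event that the histories (times `< t`) of the processes with indices in `K`
agree with those of the outcome `ω₀`. -/
def histEq {m : ℕ} {α : Type*} (R : Fin m → ℕ → Ω → α) (K : Set (Fin m)) (t : ℕ)
    (ω₀ : Ω) : Set Ω :=
  {ω | ∀ k ∈ K, ∀ s < t, R k s ω = R k s ω₀}

/-- Directed information `I(R_i → R_j ‖ R_{-{i,j}})` over the horizon `[1,T]`: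
the average over `t` of the expected log-ratio of `P(R_{j,t} | R^{t-1})` to
`P(R_{j,t} | R_{-{i}}^{t-1})`. -/
noncomputable def DI [Fintype Ω] (μ : Ω → ℝ) {m : ℕ} {α : Type*}
    (R : Fin m → ℕ → Ω → α) (T : ℕ) (i j : Fin m) : ℝ :=
  (T : ℝ)⁻¹ * ∑ t ∈ Finset.Icc 1 T, ∑ ω, μ ω *
    Real.log
      (cpr μ {ω' | R j t ω' = R j t ω} (histEq R Set.univ t ω) /
        cpr μ {ω' | R j t ω' = R j t ω} (histEq R {k | k ≠ i} t ω))


/-- The linear form `aᵀ u` where `u = ⊗_k (1, R_{k,t-1})` is the Kronecker product over all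
processes: the component of `u` indexed by a subset `S` of processes is `∏_{k ∈ S} R_k`
(with the binary states viewed as `0/1`), and `a` assigns a coefficient to each subset. -/
noncomputable def linForm {m : ℕ} (a : Finset (Fin m) → ℝ) (v : Fin m → Bool) : ℝ :=
  ∑ S : Finset (Fin m), a S * ∏ k ∈ S, (if v k then (1 : ℝ) else 0)

/-! ### Basic probability lemmas -/

lemma pr_nonneg [Fintype Ω] {μ : Ω → ℝ} (hnn : ∀ ω, 0 ≤ μ ω) (A : Set Ω) : 0 ≤ pr μ A := by
  apply Finset.sum_nonneg
  intro ω _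
  split
  · exact hnn ω
  · exact le_refl 0

lemma le_pr [Fintype Ω] {μ : Ω → ℝ} (hnn : ∀ ω, 0 ≤ μ ω) {A : Set Ω} {ω : Ω} (h : ω ∈ A) :
    μ ω ≤ pr μ A := by
  have := Finset.single_le_sum (f := fun ω' => if ω' ∈ A then μ ω' else 0)
    (fun ω' _ => by split
                    · exact hnn ω'
                    · exact le_refl 0) (Finset.mem_univ ω)
  simpa [h, pr] using this

lemma pr_split [Fintype Ω] (μ : Ω → ℝ) (A B : Set Ω) :
    pr μ (A ∩ B) + pr μ (Aᶜ ∩ B) = pr μ B := by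
  unfold pr
  rw [← Finset.sum_add_distrib]
  apply Finset.sum_congr rfl
  intro ω _
  by_cases hA : ω ∈ A <;> by_cases hB : ω ∈ B <;>
    simp [hA, hB, Set.mem_inter_iff]

lemma cpr_add_compl [Fintype Ω] (μ : Ω → ℝ) (A B : Set Ω) (hB : pr μ B ≠ 0) :
    cpr μ A B + cpr μ Aᶜ B = 1 := by
  unfold cpr
  rw [← add_div, pr_split, div_self hB]

/-! ### histEq lemmas -/

lemma histEq_refl {m : ℕ} {α : Type*} (R : Fin m → ℕ → Ω → α) (K : Set (Fin m)) (t : ℕ)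
    (ω : Ω) : ω ∈ histEq R K t ω := fun _ _ _ _ => rfl

lemma histEq_symm {m : ℕ} {α : Type*} {R : Fin m → ℕ → Ω → α} {K : Set (Fin m)} {t : ℕ}
    {ω ω' : Ω} (h : ω' ∈ histEq R K t ω) : ω ∈ histEq R K t ω' :=
  fun k hk s hs => (h k hk s hs).symm

lemma histEq_trans {m : ℕ} {α : Type*} {R : Fin m → ℕ → Ω → α} {K : Set (Fin m)} {t : ℕ}
    {ω ω' ω'' : Ω} (h : ω' ∈ histEq R K t ω) (h' : ω'' ∈ histEq R K t ω') :
    ω'' ∈ histEq R K t ω :=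
  fun k hk s hs => (h' k hk s hs).trans (h k hk s hs)

lemma histEq_eq {m : ℕ} {α : Type*} {R : Fin m → ℕ → Ω → α} {K : Set (Fin m)} {t : ℕ}
    {ω ω' : Ω} (h : ω' ∈ histEq R K t ω) : histEq R K t ω' = histEq R K t ω := by
  ext ω''
  exact ⟨fun h'' => histEq_trans h h'', fun h'' => histEq_trans (histEq_symm h) h''⟩

/-! ### The logistic function -/

noncomputable def sig (x : ℝ) : ℝ := Real.exp x / (1 + Real.exp x)

lemma one_add_exp_pos (x : ℝ) : 0 < 1 + Real.exp x := by positivity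

lemma sig_pos (x : ℝ) : 0 < sig x :=
  div_pos (Real.exp_pos x) (one_add_exp_pos x)

lemma sig_lt_one (x : ℝ) : sig x < 1 := by
  rw [sig, div_lt_one (one_add_exp_pos x)]
  linarith

lemma sig_inj {x y : ℝ} (h : sig x = sig y) : x = y := by
  rw [sig, sig, div_eq_div_iff (one_add_exp_pos x).ne' (one_add_exp_pos y).ne'] at h
  have : Real.exp x = Real.exp y := by linear_combination h
  exact Real.exp_injective this

/-! ### The transition kernel -/

noncomputable def pB {m : ℕ} (a : Finset (Fin m) → ℝ) (b : Bool) (v : Fin m → Bool) : ℝ :=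
  if b then sig (linForm a v) else 1 - sig (linForm a v)

lemma pB_pos {m : ℕ} (a : Finset (Fin m) → ℝ) (b : Bool) (v : Fin m → Bool) :
    0 < pB a b v := by
  cases b <;> simp [pB]
  · linarith [sig_lt_one (linForm a v)]
  · exact sig_pos _

lemma pB_true_eq {m : ℕ} (a : Finset (Fin m) → ℝ) (v : Fin m → Bool) :
    pB a true v = sig (linForm a v) := rfl

lemma one_sub_pB_false {m : ℕ} (a : Finset (Fin m) → ℝ) (v : Fin m → Bool) :
    1 - pB a false v = pB a true v := by simp [pB]


/-! ### Events -/

def Aev {m : ℕ} (R : Fin m → ℕ → Ω → Bool) (j : Fin m) (t : ℕ) (b : Bool) : Set Ω :=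
  {ω' | R j t ω' = b}

def Dev {m : ℕ} (R : Fin m → ℕ → Ω → Bool) (t : ℕ) (ω : Ω) : Set Ω :=
  histEq R Set.univ t ω

def Cev {m : ℕ} (R : Fin m → ℕ → Ω → Bool) (i : Fin m) (t : ℕ) (ω : Ω) : Set Ω :=
  histEq R {k | k ≠ i} t ω

def Eev {m : ℕ} (R : Fin m → ℕ → Ω → Bool) (t : ℕ) (v : Fin m → Bool) : Set Ω :=
  {ω' | ∀ k, R k (t - 1) ω' = v k}

def st {m : ℕ} (R : Fin m → ℕ → Ω → Bool) (t : ℕ) (ω : Ω) : Fin m → Bool :=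
  fun k => R k (t - 1) ω

lemma Dev_subset_Cev {m : ℕ} (R : Fin m → ℕ → Ω → Bool) (i : Fin m) (t : ℕ) (ω : Ω) :
    Dev R t ω ⊆ Cev R i t ω :=
  fun _ h k _ s hs => h k (Set.mem_univ k) s hs

lemma st_eq_of_Dev {m : ℕ} {R : Fin m → ℕ → Ω → Bool} {t : ℕ} (ht : 1 ≤ t) {ω ω' : Ω}
    (h : ω' ∈ Dev R t ω) : st R t ω' = st R t ω := by
  funext k
  exact h k (Set.mem_univ k) (t - 1) (Nat.sub_lt ht one_pos)

section Kernel

variable [Fintype Ω] {μ : Ω → ℝ} {m : ℕ} {R : Fin m → ℕ → Ω → Bool} {i j : Fin m}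
  {a : Finset (Fin m) → ℝ} {t : ℕ}

/-- conditional probabilities given the full previous state. -/
lemma cprE (hsupp : ∀ v : Fin m → Bool, 0 < pr μ (Eev R t v))
    (hlog : ∀ v : Fin m → Bool,
      cpr μ (Aev R j t true) (Eev R t v) = sig (linForm a v))
    (v : Fin m → Bool) (b : Bool) :
    cpr μ (Aev R j t b) (Eev R t v) = pB a b v := by
  cases b
  · have hc : Aev R j t false = (Aev R j t true)ᶜ := by
      ext ω'; simp [Aev]
    have h1 := cpr_add_compl μ (Aev R j t true) (Eev R t v) (hsupp v).ne'
    rw [hc]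
    have := hlog v
    simp only [pB, if_neg (by simp : ¬ (false = true))]
    linarith
  · exact (hlog v).trans (pB_true_eq a v).symm

/-- conditional probabilities given the whole past. -/
lemma cprD (hE : ∀ v b, cpr μ (Aev R j t b) (Eev R t v) = pB a b v)
    (hmkv : ∀ ω, 0 < μ ω → ∀ b : Bool,
      cpr μ (Aev R j t b) (Dev R t ω) = cpr μ (Aev R j t b) (Eev R t (st R t ω)))
    {ω : Ω} (hω : 0 < μ ω) (b : Bool) :
    cpr μ (Aev R j t b) (Dev R t ω) = pB a b (st R t ω) :=
  (hmkv ω hω b).trans (hE (st R t ω) b)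

/-- The grouping workhorse. -/
lemma groupG (hnn : ∀ ω, 0 ≤ μ ω)
    (hD : ∀ ω, 0 < μ ω → ∀ b : Bool,
      cpr μ (Aev R j t b) (Dev R t ω) = pB a b (st R t ω))
    (B : Set Ω) (hB : ∀ ω ∈ B, ∀ ω' ∈ Dev R t ω, ω' ∈ B)
    (f : Ω → ℝ) (hf : ∀ ω ω', ω' ∈ Dev R t ω → f ω' = f ω) (b : Bool) :
    ∑ ω, (if ω ∈ B ∧ R j t ω = b then μ ω * f ω else 0)
      = ∑ ω, (if ω ∈ B then μ ω * pB a b (st R t ω) * f ω else 0) := by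
  have key : ∀ ω, (if ω ∈ B then μ ω * pB a b (st R t ω) * f ω else 0)
      = ∑ ω', (if ω ∈ B ∧ (ω' ∈ Dev R t ω ∧ R j t ω' = b)
          then μ ω * f ω * ((pr μ (Dev R t ω))⁻¹ * μ ω') else 0) := by
    intro ω
    by_cases hωB : ω ∈ B
    · rcases eq_or_lt_of_le (hnn ω) with hμ | hμ
      · rw [if_pos hωB, ← hμ]
        rw [Finset.sum_eq_zero]
        · ring
        · intro ω' _
          split
          · ring
          · rfl
      · have hDpos : 0 < pr μ (Dev R t ω) :=
          lt_of_lt_of_le hμ (le_pr hnn (histEq_refl R Set.univ t ω))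
        have hq := hD ω hμ b
        have hsum2 : ∑ ω', (if ω ∈ B ∧ (ω' ∈ Dev R t ω ∧ R j t ω' = b)
              then μ ω * f ω * ((pr μ (Dev R t ω))⁻¹ * μ ω') else 0)
            = μ ω * f ω * (pr μ (Dev R t ω))⁻¹ * pr μ (Aev R j t b ∩ Dev R t ω) := by
          simp only [pr, Finset.mul_sum]
          apply Finset.sum_congr rfl
          intro ω' _
          by_cases h : ω' ∈ Dev R t ω ∧ R j t ω' = b
          · rw [if_pos ⟨hωB, h⟩,
              if_pos (show ω' ∈ Aev R j t b ∩ Dev R t ω from ⟨h.2, h.1⟩)]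
            ring
          · rw [if_neg (by tauto),
              if_neg (fun hmem : ω' ∈ Aev R j t b ∩ Dev R t ω => h ⟨hmem.2, hmem.1⟩)]
            ring
        rw [hsum2, if_pos hωB]
        have hnum : pr μ (Aev R j t b ∩ Dev R t ω)
            = pB a b (st R t ω) * pr μ (Dev R t ω) := by
          rw [← hq, cpr, div_mul_cancel₀]
          exact hDpos.ne'
        rw [hnum]
        field_simp
    · rw [if_neg hωB, Finset.sum_eq_zero]
      intro ω' _
      rw [if_neg (by tauto)]
  have h1 : ∑ ω, (if ω ∈ B then μ ω * pB a b (st R t ω) * f ω else 0)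
      = ∑ ω', ∑ ω, (if ω ∈ B ∧ (ω' ∈ Dev R t ω ∧ R j t ω' = b)
          then μ ω * f ω * ((pr μ (Dev R t ω))⁻¹ * μ ω') else 0) := by
    rw [← Finset.sum_comm]
    exact Finset.sum_congr rfl (fun ω _ => key ω)
  rw [h1]
  apply Finset.sum_congr rfl
  intro x _
  rcases eq_or_lt_of_le (hnn x) with hμ | hμ
  · rw [Finset.sum_eq_zero]
    · split
      · rw [← hμ]; ring
      · rfl
    · intro ω _
      split
      · rw [← hμ]; ring
      · rfl
  · have hDx : 0 < pr μ (Dev R t x) :=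
      lt_of_lt_of_le hμ (le_pr hnn (histEq_refl R Set.univ t x))
    by_cases hx : x ∈ B ∧ R j t x = b
    · rw [if_pos hx]
      have hterm : ∀ ω, (if ω ∈ B ∧ (x ∈ Dev R t ω ∧ R j t x = b)
            then μ ω * f ω * ((pr μ (Dev R t ω))⁻¹ * μ x) else 0)
          = (if ω ∈ Dev R t x then μ ω else 0) * (f x * ((pr μ (Dev R t x))⁻¹ * μ x)) := by
        intro ω
        by_cases hω : ω ∈ Dev R t x
        · have hxω : x ∈ Dev R t ω := histEq_symm hω
          have hDeq : Dev R t ω = Dev R t x := histEq_eq hω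
          have hfeq : f ω = f x := hf x ω hω
          have hωB : ω ∈ B := hB x hx.1 ω hω
          rw [if_pos ⟨hωB, hxω, hx.2⟩, if_pos hω, hDeq, hfeq]
          ring
        · rw [if_neg, if_neg hω]
          · ring
          · intro hc
            exact hω (histEq_symm hc.2.1)
      rw [Finset.sum_congr rfl (fun ω _ => hterm ω), ← Finset.sum_mul]
      have : ∑ ω, (if ω ∈ Dev R t x then μ ω else 0) = pr μ (Dev R t x) := rfl
      rw [this]
      field_simp
    · rw [if_neg hx, Finset.sum_eq_zero]
      intro ω _
      rw [if_neg]
      intro hc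
      exact hx ⟨hB ω hc.1 x hc.2.1, hc.2.2⟩

/-- mixture identity over a `C`-atom. -/
lemma mixture (hnn : ∀ ω, 0 ≤ μ ω)
    (hD : ∀ ω, 0 < μ ω → ∀ b : Bool,
      cpr μ (Aev R j t b) (Dev R t ω) = pB a b (st R t ω))
    (ω₀ : Ω) (b : Bool) :
    pr μ (Aev R j t b ∩ Cev R i t ω₀)
      = ∑ ω, (if ω ∈ Cev R i t ω₀ then μ ω * pB a b (st R t ω) else 0) := by
  have hB : ∀ ω ∈ Cev R i t ω₀, ∀ ω' ∈ Dev R t ω, ω' ∈ Cev R i t ω₀ := by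
    intro ω hω ω' hω'
    exact histEq_trans hω (Dev_subset_Cev R i t ω hω')
  have := groupG (a := a) hnn hD (Cev R i t ω₀) hB (fun _ => 1) (fun _ _ _ => rfl) b
  simp only [mul_one] at this
  rw [← this, pr]
  apply Finset.sum_congr rfl
  intro ω _
  by_cases h : ω ∈ Cev R i t ω₀ ∧ R j t ω = b
  · rw [if_pos h, if_pos (show ω ∈ Aev R j t b ∩ Cev R i t ω₀ from ⟨h.2, h.1⟩)]
  · rw [if_neg h, if_neg (fun hm : ω ∈ Aev R j t b ∩ Cev R i t ω₀ => h ⟨hm.2, hm.1⟩)]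

/-- reweighting identity over a `C`-atom. -/
lemma L1 (hnn : ∀ ω, 0 ≤ μ ω) (ht : 1 ≤ t)
    (hD : ∀ ω, 0 < μ ω → ∀ b : Bool,
      cpr μ (Aev R j t b) (Dev R t ω) = pB a b (st R t ω))
    (ω₀ : Ω) (b : Bool) :
    ∑ ω, (if ω ∈ Cev R i t ω₀ ∧ R j t ω = b
        then μ ω * (pB a b (st R t ω))⁻¹ else 0) = pr μ (Cev R i t ω₀) := by
  have hB : ∀ ω ∈ Cev R i t ω₀, ∀ ω' ∈ Dev R t ω, ω' ∈ Cev R i t ω₀ := by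
    intro ω hω ω' hω'
    exact histEq_trans hω (Dev_subset_Cev R i t ω hω')
  have hf : ∀ ω ω', ω' ∈ Dev R t ω →
      (pB a b (st R t ω'))⁻¹ = (pB a b (st R t ω))⁻¹ := by
    intro ω ω' h
    rw [st_eq_of_Dev ht h]
  have := groupG (a := a) hnn hD (Cev R i t ω₀) hB
    (fun ω => (pB a b (st R t ω))⁻¹) hf b
  rw [this, pr]
  apply Finset.sum_congr rfl
  intro ω _
  by_cases h : ω ∈ Cev R i t ω₀
  · rw [if_pos h, if_pos h, mul_assoc, mul_inv_cancel₀ (pB_pos a b (st R t ω)).ne', mul_one]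
  · rw [if_neg h, if_neg h]

/-- the expected likelihood-ratio sums to one. -/
lemma Tsum (hnn : ∀ ω, 0 ≤ μ ω) (hsum : ∑ ω, μ ω = 1) (ht : 1 ≤ t)
    (hD : ∀ ω, 0 < μ ω → ∀ b : Bool,
      cpr μ (Aev R j t b) (Dev R t ω) = pB a b (st R t ω)) :
    ∑ ω, μ ω * (cpr μ (Aev R j t (R j t ω)) (Cev R i t ω)
        * (pB a (R j t ω) (st R t ω))⁻¹) = 1 := by
  have key : ∀ ω, μ ω * (cpr μ (Aev R j t (R j t ω)) (Cev R i t ω)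
        * (pB a (R j t ω) (st R t ω))⁻¹)
      = ∑ ω', (if ω' ∈ Cev R i t ω ∧ R j t ω' = R j t ω
          then μ ω * ((pr μ (Cev R i t ω))⁻¹ * (pB a (R j t ω) (st R t ω))⁻¹) * μ ω'
          else 0) := by
    intro ω
    rcases eq_or_lt_of_le (hnn ω) with hμ | hμ
    · rw [← hμ, Finset.sum_eq_zero]
      · ring
      · intro ω' _
        split
        · ring
        · rfl
    · have hsum2 : ∑ ω', (if ω' ∈ Cev R i t ω ∧ R j t ω' = R j t ω
          then μ ω * ((pr μ (Cev R i t ω))⁻¹ * (pB a (R j t ω) (st R t ω))⁻¹) * μ ω'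
          else 0)
          = μ ω * ((pr μ (Cev R i t ω))⁻¹ * (pB a (R j t ω) (st R t ω))⁻¹)
            * pr μ (Aev R j t (R j t ω) ∩ Cev R i t ω) := by
        simp only [pr, Finset.mul_sum]
        apply Finset.sum_congr rfl
        intro ω' _
        by_cases h : ω' ∈ Cev R i t ω ∧ R j t ω' = R j t ω
        · rw [if_pos h,
            if_pos (show ω' ∈ Aev R j t (R j t ω) ∩ Cev R i t ω from ⟨h.2, h.1⟩)]
        · rw [if_neg h,
            if_neg (fun hm : ω' ∈ Aev R j t (R j t ω) ∩ Cev R i t ω => h ⟨hm.2, hm.1⟩)]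
          ring
      rw [hsum2, cpr]
      ring
  rw [Finset.sum_congr rfl (fun ω _ => key ω), Finset.sum_comm, ← hsum]
  apply Finset.sum_congr rfl
  intro x _
  rcases eq_or_lt_of_le (hnn x) with hμ | hμ
  · rw [Finset.sum_eq_zero, ← hμ]
    intro ω _
    split
    · rw [← hμ]; ring
    · rfl
  · have hCx : 0 < pr μ (Cev R i t x) :=
      lt_of_lt_of_le hμ (le_pr hnn (histEq_refl R _ t x))
    have hterm : ∀ ω, (if x ∈ Cev R i t ω ∧ R j t x = R j t ω
          then μ ω * ((pr μ (Cev R i t ω))⁻¹ * (pB a (R j t ω) (st R t ω))⁻¹) * μ x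
          else 0)
        = (if ω ∈ Cev R i t x ∧ R j t ω = R j t x
            then μ ω * (pB a (R j t x) (st R t ω))⁻¹ else 0)
          * ((pr μ (Cev R i t x))⁻¹ * μ x) := by
      intro ω
      by_cases h : ω ∈ Cev R i t x ∧ R j t ω = R j t x
      · have hCeq : Cev R i t ω = Cev R i t x := histEq_eq h.1
        rw [if_pos ⟨histEq_symm h.1, h.2.symm⟩, if_pos h, hCeq, h.2]
        ring
      · rw [if_neg, if_neg h]
        · ring
        · intro hc
          exact h ⟨histEq_symm hc.1, hc.2.symm⟩
    rw [Finset.sum_congr rfl (fun ω _ => hterm ω), ← Finset.sum_mul,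
      L1 hnn ht hD x (R j t x), ← mul_assoc, mul_inv_cancel₀ hCx.ne', one_mul]

lemma cprC_pos (hnn : ∀ ω, 0 ≤ μ ω) {ω : Ω} (hμ : 0 < μ ω) :
    0 < cpr μ (Aev R j t (R j t ω)) (Cev R i t ω) := by
  have h1 : 0 < pr μ (Aev R j t (R j t ω) ∩ Cev R i t ω) :=
    lt_of_lt_of_le hμ (le_pr hnn ⟨rfl, histEq_refl R _ t ω⟩)
  have h2 : 0 < pr μ (Cev R i t ω) :=
    lt_of_lt_of_le hμ (le_pr hnn (histEq_refl R _ t ω))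
  exact div_pos h1 h2

lemma St_main (hnn : ∀ ω, 0 ≤ μ ω) (hsum : ∑ ω, μ ω = 1) (ht : 1 ≤ t)
    (hD : ∀ ω, 0 < μ ω → ∀ b : Bool,
      cpr μ (Aev R j t b) (Dev R t ω) = pB a b (st R t ω)) :
    0 ≤ ∑ ω, μ ω * Real.log (cpr μ (Aev R j t (R j t ω)) (Dev R t ω) /
        cpr μ (Aev R j t (R j t ω)) (Cev R i t ω)) ∧
    ((∑ ω, μ ω * Real.log (cpr μ (Aev R j t (R j t ω)) (Dev R t ω) /
        cpr μ (Aev R j t (R j t ω)) (Cev R i t ω))) = 0 →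
      ∀ ω, 0 < μ ω →
        cpr μ (Aev R j t (R j t ω)) (Cev R i t ω) = pB a (R j t ω) (st R t ω)) := by
  have hzero : ∑ ω, (μ ω - μ ω * (cpr μ (Aev R j t (R j t ω)) (Cev R i t ω)
      * (pB a (R j t ω) (st R t ω))⁻¹)) = 0 := by
    rw [Finset.sum_sub_distrib, hsum, Tsum hnn hsum ht hD, sub_self]
  have hd : ∀ ω, μ ω - μ ω * (cpr μ (Aev R j t (R j t ω)) (Cev R i t ω)
      * (pB a (R j t ω) (st R t ω))⁻¹)
      ≤ μ ω * Real.log (cpr μ (Aev R j t (R j t ω)) (Dev R t ω) /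
        cpr μ (Aev R j t (R j t ω)) (Cev R i t ω)) := by
    intro ω
    rcases eq_or_lt_of_le (hnn ω) with hμ | hμ
    · rw [← hμ]; simp
    · have hq := hD ω hμ (R j t ω)
      have hqpos := pB_pos a (R j t ω) (st R t ω)
      have hrpos := cprC_pos (R := R) (i := i) (j := j) (t := t) hnn hμ
      rw [hq]
      set r := cpr μ (Aev R j t (R j t ω)) (Cev R i t ω)
      set q := pB a (R j t ω) (st R t ω)
      have hqr : q / r = (r * q⁻¹)⁻¹ := by
        field_simp
      have hlog := Real.log_le_sub_one_of_pos (mul_pos hrpos (inv_pos.2 hqpos))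
      have hkey : 1 - r * q⁻¹ ≤ Real.log (q / r) := by
        rw [hqr, Real.log_inv]; linarith
      have hmul := mul_le_mul_of_nonneg_left hkey (hnn ω)
      linarith [hmul]
  constructor
  · calc (0:ℝ) = ∑ ω, (μ ω - μ ω * (cpr μ (Aev R j t (R j t ω)) (Cev R i t ω)
          * (pB a (R j t ω) (st R t ω))⁻¹)) := hzero.symm
      _ ≤ _ := Finset.sum_le_sum (fun ω _ => hd ω)
  · intro hSt ω hμ
    have hall : ∑ ω, (μ ω * Real.log (cpr μ (Aev R j t (R j t ω)) (Dev R t ω) /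
          cpr μ (Aev R j t (R j t ω)) (Cev R i t ω))
        - (μ ω - μ ω * (cpr μ (Aev R j t (R j t ω)) (Cev R i t ω)
          * (pB a (R j t ω) (st R t ω))⁻¹))) = 0 := by
      rw [Finset.sum_sub_distrib, hSt, hzero, sub_zero]
    have hterm := (Finset.sum_eq_zero_iff_of_nonneg
      (fun ω _ => sub_nonneg.2 (hd ω))).1 hall ω (Finset.mem_univ ω)
    have heq : μ ω * Real.log (cpr μ (Aev R j t (R j t ω)) (Dev R t ω) /
          cpr μ (Aev R j t (R j t ω)) (Cev R i t ω))
        = μ ω * (1 - cpr μ (Aev R j t (R j t ω)) (Cev R i t ω)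
          * (pB a (R j t ω) (st R t ω))⁻¹) := by
      rw [sub_eq_zero] at hterm
      rw [hterm]; ring
    have heq2 := mul_left_cancel₀ hμ.ne' heq
    have hq := hD ω hμ (R j t ω)
    have hqpos := pB_pos a (R j t ω) (st R t ω)
    have hrpos := cprC_pos (R := R) (i := i) (j := j) (t := t) hnn hμ
    rw [hq] at heq2
    set r := cpr μ (Aev R j t (R j t ω)) (Cev R i t ω)
    set q := pB a (R j t ω) (st R t ω)
    have hg : 0 < r * q⁻¹ := mul_pos hrpos (inv_pos.2 hqpos)
    have hqr : q / r = (r * q⁻¹)⁻¹ := by field_simp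
    rw [hqr, Real.log_inv] at heq2
    by_contra hne
    have hgne : r * q⁻¹ ≠ 1 := by
      intro h1
      exact hne ((mul_inv_eq_one₀ hqpos.ne').1 h1)
    have := Real.log_lt_sub_one_of_pos hg hgne
    linarith

lemma linForm_eq_of_agree (ha : ∀ S : Finset (Fin m), i ∈ S → a S = 0)
    {v w : Fin m → Bool} (h : ∀ k, k ≠ i → v k = w k) :
    linForm a v = linForm a w := by
  apply Finset.sum_congr rfl
  intro S _
  by_cases hi : i ∈ S
  · rw [ha S hi]; ring
  · congr 1
    apply Finset.prod_congr rfl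
    intro k hk
    rw [h k (fun he => hi (he ▸ hk))]

lemma St_zero_of_a2 (hnn : ∀ ω, 0 ≤ μ ω) (ht : 1 ≤ t)
    (hD : ∀ ω, 0 < μ ω → ∀ b : Bool,
      cpr μ (Aev R j t b) (Dev R t ω) = pB a b (st R t ω))
    (ha : ∀ S : Finset (Fin m), i ∈ S → a S = 0) :
    ∑ ω, μ ω * Real.log (cpr μ (Aev R j t (R j t ω)) (Dev R t ω) /
        cpr μ (Aev R j t (R j t ω)) (Cev R i t ω)) = 0 := by
  apply Finset.sum_eq_zero
  intro ω _
  rcases eq_or_lt_of_le (hnn ω) with hμ | hμ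
  · rw [← hμ, zero_mul]
  · have hq := hD ω hμ (R j t ω)
    have hconst : ∀ ω', ω' ∈ Cev R i t ω →
        pB a (R j t ω) (st R t ω') = pB a (R j t ω) (st R t ω) := by
      intro ω' h'
      have hl : linForm a (st R t ω') = linForm a (st R t ω) :=
        linForm_eq_of_agree ha (fun k hk => h' k hk (t - 1) (Nat.sub_lt ht one_pos))
      simp only [pB, hl]
    have hmix := mixture (i := i) hnn hD ω (R j t ω)
    have hnum : pr μ (Aev R j t (R j t ω) ∩ Cev R i t ω)
        = pB a (R j t ω) (st R t ω) * pr μ (Cev R i t ω) := by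
      rw [hmix, pr, Finset.mul_sum]
      apply Finset.sum_congr rfl
      intro ω' _
      by_cases h' : ω' ∈ Cev R i t ω
      · rw [if_pos h', if_pos h', hconst ω' h']; ring
      · rw [if_neg h', if_neg h', mul_zero]
    have hCpos : 0 < pr μ (Cev R i t ω) :=
      lt_of_lt_of_le hμ (le_pr hnn (histEq_refl R _ t ω))
    have hC : cpr μ (Aev R j t (R j t ω)) (Cev R i t ω)
        = pB a (R j t ω) (st R t ω) := by
      rw [cpr, hnum, mul_div_assoc, div_self hCpos.ne', mul_one]
    rw [hq, hC, div_self (pB_pos a (R j t ω) (st R t ω)).ne', Real.log_one, mul_zero]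

lemma exists_pos_mem (hnn : ∀ ω, 0 ≤ μ ω) {A : Set Ω} (h : 0 < pr μ A) :
    ∃ ω, 0 < μ ω ∧ ω ∈ A := by
  by_contra hc
  push_neg at hc
  have hz : pr μ A = 0 := by
    apply Finset.sum_eq_zero
    intro ω _
    by_cases hA : ω ∈ A
    · rw [if_pos hA]
      exact le_antisymm (not_lt.1 (fun hp => hc ω hp hA)) (hnn ω)
    · rw [if_neg hA]
  rw [hz] at h
  exact lt_irrefl 0 h

lemma cpr_true_eq {C : Set Ω} (hC : pr μ C ≠ 0) {b : Bool} {v : Fin m → Bool}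
    (h : cpr μ (Aev R j t b) C = pB a b v) :
    cpr μ (Aev R j t true) C = sig (linForm a v) := by
  cases b
  · have hcompl := cpr_add_compl μ (Aev R j t false) C hC
    have hc : (Aev R j t false)ᶜ = Aev R j t true := by
      ext ω'; simp [Aev]
    rw [hc, h] at hcompl
    have hfalse : pB a false v = 1 - sig (linForm a v) := by simp [pB]
    rw [hfalse] at hcompl
    linarith
  · exact h

lemma a2_from_eq (hnn : ∀ ω, 0 ≤ μ ω)
    (hsupp1 : ∀ v : Fin m → Bool, 0 < pr μ (Eev R 1 v))
    (heq : ∀ ω, 0 < μ ω →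
      cpr μ (Aev R j 1 (R j 1 ω)) (Cev R i 1 ω) = pB a (R j 1 ω) (st R 1 ω)) :
    ∀ v : Fin m → Bool,
      linForm a (Function.update v i true) = linForm a (Function.update v i false) := by
  intro v
  obtain ⟨ω₁, hμ1, hE1⟩ := exists_pos_mem hnn (hsupp1 (Function.update v i true))
  obtain ⟨ω₀, hμ0, hE0⟩ := exists_pos_mem hnn (hsupp1 (Function.update v i false))
  have hst1 : st R 1 ω₁ = Function.update v i true := funext (fun k => hE1 k)
  have hst0 : st R 1 ω₀ = Function.update v i false := funext (fun k => hE0 k)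
  have hmem : ω₁ ∈ Cev R i 1 ω₀ := by
    intro k hk s hs
    have hs0 : s = 0 := Nat.lt_one_iff.1 hs
    have h1 : R k 0 ω₁ = Function.update v i true k := hE1 k
    have h0 : R k 0 ω₀ = Function.update v i false k := hE0 k
    rw [hs0, h1, h0, Function.update_of_ne hk, Function.update_of_ne hk]
  have hCeq : Cev R i 1 ω₁ = Cev R i 1 ω₀ := histEq_eq hmem
  have hC0pos : 0 < pr μ (Cev R i 1 ω₀) :=
    lt_of_lt_of_le hμ0 (le_pr hnn (histEq_refl R _ 1 ω₀))
  have h0 := cpr_true_eq (C := Cev R i 1 ω₀) hC0pos.ne' (heq ω₀ hμ0)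
  have h1 := cpr_true_eq (C := Cev R i 1 ω₁) (by rw [hCeq]; exact hC0pos.ne') (heq ω₁ hμ1)
  rw [hCeq] at h1
  have := sig_inj (h1.symm.trans h0)
  rw [hst1, hst0] at this
  exact this

lemma prod_indicator {m : ℕ} (W U : Finset (Fin m)) :
    (∏ k ∈ U, (if (decide (k ∈ W) : Bool) then (1:ℝ) else 0))
      = if U ⊆ W then 1 else 0 := by
  split
  next h => exact Finset.prod_eq_one (fun k hk => by simp [h hk])
  next h =>
    obtain ⟨k, hkU, hkW⟩ := Finset.not_subset.1 h
    exact Finset.prod_eq_zero hkU (by simp [hkW])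

lemma key_formula {m : ℕ} (a : Finset (Fin m) → ℝ) (i : Fin m)
    (hv : ∀ v : Fin m → Bool,
      linForm a (Function.update v i true) = linForm a (Function.update v i false))
    (W : Finset (Fin m)) :
    ∑ S ∈ Finset.univ.filter (fun S => i ∈ S),
      a S * (if S.erase i ⊆ W then (1:ℝ) else 0) = 0 := by
  set v : Fin m → Bool := fun k => decide (k ∈ W) with hvdef
  have hdiff := hv v
  have hexp : ∀ (c : Bool) (S : Finset (Fin m)),
      a S * ∏ k ∈ S, (if Function.update v i c k then (1:ℝ) else 0)
      = if i ∈ S then a S * ((if c then (1:ℝ) else 0) *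
          ∏ k ∈ S.erase i, (if v k then (1:ℝ) else 0))
        else a S * ∏ k ∈ S, (if v k then (1:ℝ) else 0) := by
    intro c S
    by_cases hi : i ∈ S
    · rw [if_pos hi, ← Finset.mul_prod_erase S _ hi, Function.update_self]
      congr 2
      apply Finset.prod_congr rfl
      intro k hk
      rw [Function.update_of_ne (Finset.ne_of_mem_erase hk)]
    · rw [if_neg hi]
      congr 1
      apply Finset.prod_congr rfl
      intro k hk
      rw [Function.update_of_ne (show k ≠ i from fun he => hi (he ▸ hk))]
  have hsub : ∑ S : Finset (Fin m),
      (a S * ∏ k ∈ S, (if Function.update v i true k then (1:ℝ) else 0)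
        - a S * ∏ k ∈ S, (if Function.update v i false k then (1:ℝ) else 0)) = 0 := by
    rw [Finset.sum_sub_distrib]
    have h1 : linForm a (Function.update v i true)
        = ∑ S : Finset (Fin m), a S * ∏ k ∈ S, (if Function.update v i true k then (1:ℝ) else 0) := rfl
    have h2 : linForm a (Function.update v i false)
        = ∑ S : Finset (Fin m), a S * ∏ k ∈ S, (if Function.update v i false k then (1:ℝ) else 0) := rfl
    rw [← h1, ← h2, hdiff, sub_self]
  have hterm : ∀ S : Finset (Fin m),
      (a S * ∏ k ∈ S, (if Function.update v i true k then (1:ℝ) else 0)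
        - a S * ∏ k ∈ S, (if Function.update v i false k then (1:ℝ) else 0))
      = if i ∈ S then a S * (if S.erase i ⊆ W then (1:ℝ) else 0) else 0 := by
    intro S
    rw [hexp true S, hexp false S]
    by_cases hi : i ∈ S
    · rw [if_pos hi, if_pos hi, if_pos hi]
      have : (∏ k ∈ S.erase i, (if v k then (1:ℝ) else 0))
          = if S.erase i ⊆ W then 1 else 0 := prod_indicator W (S.erase i)
      rw [this]
      simp
    · rw [if_neg hi, if_neg hi, if_neg hi, sub_self]
  rw [Finset.sum_congr rfl (fun S _ => hterm S)] at hsub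
  rw [← Finset.sum_filter] at hsub
  exact hsub

lemma a2_zero_of_key {m : ℕ} (a : Finset (Fin m) → ℝ) (i : Fin m)
    (hkey : ∀ W : Finset (Fin m),
      ∑ S ∈ Finset.univ.filter (fun S => i ∈ S),
        a S * (if S.erase i ⊆ W then (1:ℝ) else 0) = 0) :
    ∀ S : Finset (Fin m), i ∈ S → a S = 0 := by
  have main : ∀ n : ℕ, ∀ S : Finset (Fin m), i ∈ S → S.card ≤ n → a S = 0 := by
    intro n
    induction n with
    | zero =>
      intro S hi hcard
      have : S = ∅ := Finset.card_eq_zero.1 (Nat.le_zero.1 hcard)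
      rw [this] at hi
      exact absurd hi (Finset.notMem_empty i)
    | succ n ih =>
      intro S hi hcard
      have hW := hkey (S.erase i)
      have hsingle : ∑ S' ∈ Finset.univ.filter (fun S' => i ∈ S'),
          a S' * (if S'.erase i ⊆ S.erase i then (1:ℝ) else 0) = a S := by
        rw [Finset.sum_eq_single S]
        · rw [if_pos (Finset.Subset.refl _), mul_one]
        · intro S' hS' hne
          have hiS' : i ∈ S' := (Finset.mem_filter.1 hS').2
          by_cases hsub : S'.erase i ⊆ S.erase i
          · have hlt : S'.erase i ⊂ S.erase i := by
              refine lt_of_le_of_ne hsub (fun he => hne ?_)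
              rw [← Finset.insert_erase hiS', he, Finset.insert_erase hi]
            have hc1 : (S'.erase i).card < (S.erase i).card := Finset.card_lt_card hlt
            have hc2 : (S'.erase i).card + 1 = S'.card := Finset.card_erase_add_one hiS'
            have hc3 : (S.erase i).card + 1 = S.card := Finset.card_erase_add_one hi
            have : S'.card ≤ n := by omega
            rw [ih S' hiS' this, zero_mul]
          · rw [if_neg hsub, mul_zero]
        · intro hS
          exact absurd (Finset.mem_filter.2 ⟨Finset.mem_univ S, hi⟩) hS
      rw [hsingle] at hW
      exact hW
  intro S hi
  exact main S.card S hi le_rfl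

end Kernel

/-- For the first-order Markov logistic transition model
`P(R_{j,t} = 1 | R_{t-1}) = exp(aᵀu)/(1+exp(aᵀu))` with
`u = (u_{R_{-{i}}}, u_{R_{-{i}}}·R_{i,t-1})`, the directed information
`I(R_i → R_j ‖ R_{-{i,j}})` vanishes if and only if `a_2 = 0`, i.e. all coefficients of
components of `u` containing the factor `R_{i,t-1}` are zero. -/
theorem di_zero_iff_a2_zero [Fintype Ω]
    (μ : Ω → ℝ) (hnn : ∀ ω, 0 ≤ μ ω) (hsum : ∑ ω, μ ω = 1)
    {m : ℕ} (R : Fin m → ℕ → Ω → Bool) (T : ℕ) (i j : Fin m) (hij : i ≠ j)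
    (hT : 1 ≤ T)
    (a : Finset (Fin m) → ℝ)
    -- every joint state of the chain at each time has positive probability
    (hsupp : ∀ t ∈ Finset.Icc 1 T, ∀ v : Fin m → Bool,
      0 < pr μ {ω | ∀ k, R k (t - 1) ω = v k})
    -- first-order Markov property: the conditional law of `R_{j,t}` given the full past
    -- depends only on the previous states of all processes
    (hmarkov : ∀ t ∈ Finset.Icc 1 T, ∀ ω, 0 < μ ω → ∀ b : Bool,
      cpr μ {ω' | R j t ω' = b} (histEq R Set.univ t ω) =
        cpr μ {ω' | R j t ω' = b} {ω' | ∀ k, R k (t - 1) ω' = R k (t - 1) ω})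
    -- logistic transition probabilities
    (hlogistic : ∀ t ∈ Finset.Icc 1 T, ∀ v : Fin m → Bool,
      cpr μ {ω' | R j t ω' = true} {ω' | ∀ k, R k (t - 1) ω' = v k} =
        Real.exp (linForm a v) / (1 + Real.exp (linForm a v))) :
    DI μ R T i j = 0 ↔ ∀ S : Finset (Fin m), i ∈ S → a S = 0 := by
  have hDfact : ∀ t ∈ Finset.Icc 1 T, ∀ ω, 0 < μ ω → ∀ b : Bool,
      cpr μ (Aev R j t b) (Dev R t ω) = pB a b (st R t ω) := by
    intro t ht ω hω b
    have hE : ∀ v : Fin m → Bool, ∀ b' : Bool,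
        cpr μ (Aev R j t b') (Eev R t v) = pB a b' v := by
      intro v b'
      exact cprE (fun v' => hsupp t ht v') (fun v' => hlogistic t ht v') v b'
    exact cprD (fun v b' => hE v b') (fun ω' hω' b' => hmarkov t ht ω' hω' b') hω b
  have hDI : DI μ R T i j = (T:ℝ)⁻¹ * ∑ t ∈ Finset.Icc 1 T,
      ∑ ω, μ ω * Real.log (cpr μ (Aev R j t (R j t ω)) (Dev R t ω) /
        cpr μ (Aev R j t (R j t ω)) (Cev R i t ω)) := rfl
  constructor
  · intro hdi
    have hTpos : (0:ℝ) < (T:ℝ) := by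
      exact_mod_cast Nat.lt_of_lt_of_le Nat.zero_lt_one hT
    have hsum0 : ∑ t ∈ Finset.Icc 1 T,
        ∑ ω, μ ω * Real.log (cpr μ (Aev R j t (R j t ω)) (Dev R t ω) /
          cpr μ (Aev R j t (R j t ω)) (Cev R i t ω)) = 0 := by
      rw [hDI] at hdi
      rcases mul_eq_zero.1 hdi with h | h
      · exact absurd h (inv_ne_zero hTpos.ne')
      · exact h
    have h1mem : (1:ℕ) ∈ Finset.Icc 1 T := Finset.mem_Icc.2 ⟨le_refl 1, hT⟩
    have hnonneg : ∀ t ∈ Finset.Icc 1 T,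
        0 ≤ ∑ ω, μ ω * Real.log (cpr μ (Aev R j t (R j t ω)) (Dev R t ω) /
          cpr μ (Aev R j t (R j t ω)) (Cev R i t ω)) :=
      fun t ht => (St_main hnn hsum (Finset.mem_Icc.1 ht).1 (hDfact t ht)).1
    have hS1 : ∑ ω, μ ω * Real.log (cpr μ (Aev R j 1 (R j 1 ω)) (Dev R 1 ω) /
          cpr μ (Aev R j 1 (R j 1 ω)) (Cev R i 1 ω)) = 0 :=
      (Finset.sum_eq_zero_iff_of_nonneg hnonneg).1 hsum0 1 h1mem
    have heq := (St_main hnn hsum le_rfl (hDfact 1 h1mem)).2 hS1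
    exact a2_zero_of_key a i
      (key_formula a i (a2_from_eq hnn (fun v => hsupp 1 h1mem v) heq))
  · intro ha
    rw [hDI, Finset.sum_eq_zero, mul_zero]
    intro t ht
    exact St_zero_of_a2 hnn (Finset.mem_Icc.1 ht).1 (hDfact t ht) ha


end Stmt9
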